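/- If Q follows a chi-squared distribution with p degrees of freedom and f : ℝ → ℝ is absolutely continuous with E|f(Q)|, E|Q·f(Q)|, E|Q·f'(Q)| finite, then E[(Q - p)·f(Q)] = 2·E[Q·f'(Q)]. -/

import Mathlib

open MeasureTheory ProbabilityTheory Real Set Filter
open scoped ENNReal NNReal

theorem chisq_ibp
    {Ω : Type*} [MeasureSpace Ω] (P : Measure Ω) [IsProbabilityMeasure P]
    (p : ℕ) (hp : 0 < p)
    (Q : Ω → ℝ) (hQ : Measurable Q)
    (hQd : P.map Q = gammaMeasure ((p : ℝ) / 2) (1 / 2))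
    (f f' : ℝ → ℝ) (hf : ∀ x, HasDerivAt f (f' x) x)
    (h1 : Integrable (fun ω => f (Q ω)) P)
    (h2 : Integrable (fun ω => Q ω * f (Q ω)) P)
    (h3 : Integrable (fun ω => Q ω * f' (Q ω)) P) :
    ∫ ω, (Q ω - p) * f (Q ω) ∂P = 2 * ∫ ω, Q ω * f' (Q ω) ∂P := by
  set a : ℝ := (p : ℝ) / 2 with ha_def
  have ha : 0 < a := by positivity
  set ρ : ℝ → ℝ := gammaPDFReal a (1/2) with hρ_def
  have hρ_meas : Measurable ρ := measurable_gammaPDFReal a (1/2)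
  have hρ_nonneg : ∀ x, 0 ≤ ρ x := gammaPDFReal_nonneg ha (by norm_num)
  set C : ℝ := (1/2 : ℝ) ^ a / Real.Gamma a with hC_def
  have hC : 0 < C :=
    div_pos (rpow_pos_of_pos (by norm_num) a) (Real.Gamma_pos_of_pos ha)
  have hρ_eq : ∀ x : ℝ, 0 ≤ x → ρ x = C * (x ^ (a - 1) * Real.exp (-(1/2 * x))) := by
    intro x hx
    simp only [hρ_def, gammaPDFReal, if_pos hx, hC_def]
    ring
  have hρ_zero : ∀ x : ℝ, x < 0 → ρ x = 0 := by
    intro x hx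
    simp [hρ_def, gammaPDFReal, not_le.mpr hx]
  have hd : gammaMeasure a (1/2) = volume.withDensity (fun x => ((ρ x).toNNReal : ℝ≥0∞)) := rfl
  have hf_diff : Differentiable ℝ f := fun x => (hf x).differentiableAt
  have hf_cont : Continuous f := hf_diff.continuous
  have hf_meas : Measurable f := hf_cont.measurable
  have hf'_meas : Measurable f' := by
    have : f' = deriv f := funext fun x => ((hf x).deriv).symm
    rw [this]; exact measurable_deriv f
  -- transfer lemmas
  have key : ∀ g : ℝ → ℝ, Measurable g →
      (Integrable (fun ω => g (Q ω)) P ↔ Integrable (fun x => ρ x * g x) volume) := by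
    intro g hg
    have e1 : Integrable (fun ω => g (Q ω)) P ↔ Integrable g (P.map Q) :=
      (integrable_map_measure hg.aestronglyMeasurable hQ.aemeasurable).symm
    rw [hQd, hd, integrable_withDensity_iff_integrable_smul hρ_meas.real_toNNReal] at e1
    refine e1.trans (integrable_congr (Filter.Eventually.of_forall fun x => ?_))
    simp [NNReal.smul_def, Real.coe_toNNReal _ (hρ_nonneg x)]
  have keyI : ∀ g : ℝ → ℝ, Measurable g →
      ∫ ω, g (Q ω) ∂P = ∫ x, ρ x * g x := by
    intro g hg
    have e1 : ∫ ω, g (Q ω) ∂P = ∫ x, g x ∂(P.map Q) :=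
      (integral_map hQ.aemeasurable hg.aestronglyMeasurable).symm
    rw [hQd, hd, integral_withDensity_eq_integral_smul hρ_meas.real_toNNReal] at e1
    rw [e1]
    refine integral_congr_ae (Filter.Eventually.of_forall fun x => ?_)
    simp [NNReal.smul_def, Real.coe_toNNReal _ (hρ_nonneg x)]
  -- transferred integrabilities
  have T1 : Integrable (fun x => ρ x * f x) volume := (key f hf_meas).mp h1
  have T2 : Integrable (fun x => ρ x * (x * f x)) volume :=
    (key (fun x => x * f x) (measurable_id.mul hf_meas)).mp h2
  have T3 : Integrable (fun x => ρ x * (x * f' x)) volume :=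
    (key (fun x => x * f' x) (measurable_id.mul hf'_meas)).mp h3
  -- the IBP function
  set g : ℝ → ℝ := fun x => x ^ a * Real.exp (-(1/2 * x)) * f x with hg_def
  set G : ℝ → ℝ := fun x =>
    (a * x ^ (a - 1) - x ^ a / 2) * Real.exp (-(1/2 * x)) * f x
      + x ^ a * Real.exp (-(1/2 * x)) * f' x with hG_def
  have hxa : ∀ x : ℝ, 0 < x → x ^ (a - 1) * x = x ^ a := by
    intro x hx
    rw [← Real.rpow_add_one hx.ne' (a - 1), sub_add_cancel]
  have hgderiv : ∀ x ∈ Ioi (0:ℝ), HasDerivAt g (G x) x := by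
    intro x hx
    have hx0 : (0:ℝ) < x := hx
    have d1 : HasDerivAt (fun y : ℝ => y ^ a) (a * x ^ (a - 1)) x :=
      Real.hasDerivAt_rpow_const (Or.inl hx0.ne')
    have d2 : HasDerivAt (fun y : ℝ => Real.exp (-(1/2 * y)))
        (Real.exp (-(1/2 * x)) * (-(1/2))) x := by
      have h : HasDerivAt (fun y : ℝ => -(1/2 * y)) (-(1/2)) x := by
        simpa [Pi.neg_def] using ((hasDerivAt_id x).const_mul (1/2 : ℝ)).neg
      exact (Real.hasDerivAt_exp _).comp x h
    have hd : HasDerivAt (fun y : ℝ => y ^ a * Real.exp (-(1/2 * y)) * f y) _ x :=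
      (d1.mul d2).mul (hf x)
    convert hd using 1
    simp only [hG_def, Pi.mul_apply]
    ring
  -- G equals a combination of integrable functions on Ioi 0
  have hGrep : ∀ x ∈ Ioi (0:ℝ),
      G x = C⁻¹ * (a * (ρ x * f x) - (ρ x * (x * f x)) / 2 + ρ x * (x * f' x)) := by
    intro x hx
    have hx0 : (0:ℝ) < x := hx
    rw [hρ_eq x hx0.le]
    simp only [hG_def]
    rw [← hxa x hx0]
    field_simp
  have hGint : IntegrableOn G (Ioi 0) volume := by
    have hint : Integrable
        (fun x => C⁻¹ * (a * (ρ x * f x) - (ρ x * (x * f x)) / 2 + ρ x * (x * f' x)))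
        volume := (((T1.const_mul a).sub (T2.div_const 2)).add T3).const_mul C⁻¹
    exact (hint.restrict (s := Ioi 0)).congr
      ((ae_restrict_iff' measurableSet_Ioi).mpr
        (Filter.Eventually.of_forall fun x hx => (hGrep x hx).symm))
  have hgrep : ∀ x ∈ Ioi (0:ℝ), g x = C⁻¹ * (ρ x * (x * f x)) := by
    intro x hx
    have hx0 : (0:ℝ) < x := hx
    rw [hρ_eq x hx0.le]
    simp only [hg_def]
    rw [← hxa x hx0]
    field_simp
  have hgint : IntegrableOn g (Ioi 0) volume :=
    ((T2.const_mul C⁻¹).restrict (s := Ioi 0)).congr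
      ((ae_restrict_iff' measurableSet_Ioi).mpr
        (Filter.Eventually.of_forall fun x hx => (hgrep x hx).symm))
  have hgtend : Tendsto g atTop (nhds 0) :=
    tendsto_zero_of_hasDerivAt_of_integrableOn_Ioi hgderiv hGint hgint
  have hg0 : g 0 = 0 := by
    simp [hg_def, Real.zero_rpow ha.ne']
  have hgcont : ContinuousWithinAt g (Ici 0) 0 := by
    have c1 : ContinuousAt (fun y : ℝ => y ^ a) 0 :=
      Real.continuousAt_rpow_const 0 a (Or.inr ha.le)
    have c2 : ContinuousAt (fun y : ℝ => Real.exp (-(1/2 * y))) 0 := by fun_prop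
    exact ((c1.mul c2).mul hf_cont.continuousAt).continuousWithinAt
  have hmain : ∫ x in Ioi (0:ℝ), G x = 0 := by
    rw [integral_Ioi_of_hasDerivAt_of_tendsto hgcont hgderiv hGint hgtend, hg0, sub_zero]
  -- reduce integrals over ℝ to Ioi 0
  have reduce : ∀ h : ℝ → ℝ, (∀ x : ℝ, x < 0 → h x = 0) →
      ∫ x, h x = ∫ x in Ioi (0:ℝ), h x := by
    intro h h0
    rw [← integral_indicator measurableSet_Ioi]
    refine integral_congr_ae ?_
    have hz : ∀ᵐ x : ℝ, x ≠ 0 := by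
      simp only [ae_iff, not_not, Set.setOf_eq_eq_singleton]
      exact Real.volume_singleton
    filter_upwards [hz] with x hx
    rcases lt_trichotomy x 0 with hlt | heq | hgt
    · rw [h0 x hlt]
      exact (Set.indicator_of_notMem (by simpa using hlt.not_gt) h).symm
    · exact absurd heq hx
    · exact (Set.indicator_of_mem (mem_Ioi.mpr hgt) h).symm
  have hpa : (p : ℝ) = 2 * a := by rw [ha_def]; ring
  have hL : ∫ ω, (Q ω - p) * f (Q ω) ∂P = ∫ x, ρ x * ((x - p) * f x) :=
    keyI (fun x => (x - p) * f x) ((measurable_id.sub measurable_const).mul hf_meas)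
  have hR : ∫ ω, Q ω * f' (Q ω) ∂P = ∫ x, ρ x * (x * f' x) :=
    keyI (fun x => x * f' x) (measurable_id.mul hf'_meas)
  rw [hL, hR]
  have hrel : ∀ x ∈ Ioi (0:ℝ),
      ρ x * ((x - p) * f x) = -2 * C * G x + 2 * (ρ x * (x * f' x)) := by
    intro x hx
    have hx0 : (0:ℝ) < x := hx
    rw [hρ_eq x hx0.le, hpa]
    simp only [hG_def]
    rw [← hxa x hx0]
    ring
  calc ∫ x, ρ x * ((x - p) * f x)
      = ∫ x in Ioi (0:ℝ), ρ x * ((x - p) * f x) :=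
        reduce _ (fun x hx => by rw [hρ_zero x hx]; ring)
    _ = ∫ x in Ioi (0:ℝ), (-2 * C * G x + 2 * (ρ x * (x * f' x))) :=
        setIntegral_congr_fun measurableSet_Ioi hrel
    _ = (-2 * C * ∫ x in Ioi (0:ℝ), G x) + 2 * ∫ x in Ioi (0:ℝ), ρ x * (x * f' x) := by
        rw [integral_add (hGint.const_mul _) ((T3.restrict).const_mul 2),
          integral_const_mul, integral_const_mul]
    _ = 2 * ∫ x in Ioi (0:ℝ), ρ x * (x * f' x) := by
        rw [hmain]; ring
    _ = 2 * ∫ x, ρ x * (x * f' x) :=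
        (congrArg (fun t => 2 * t) (reduce _ (fun x hx => by rw [hρ_zero x hx]; ring))).symm
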